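/- The conjectured binomial log-Sobolev inequality Ent_{b_{n,t}}(f) ≤ nt(1-t)·∑_{k=0}^n b_{n,t}(k)·(∇_n f(k))²/f(k) fails in general: for n = 2, t = 1/2, and f(0) = f(2) = 9/10, f(1) = 1/10, the left-hand side strictly exceeds the right-hand side. -/

import Mathlib

open Finset

lemma key18 : (16:ℝ)/9 < Real.log (19683/3125) := by
  rw [Real.lt_log_iff_exp_lt (by norm_num)]
  have h1 : Real.exp (16/9) ^ 9 = Real.exp 16 := by
    rw [← Real.exp_nat_mul]; norm_num
  have h2 : Real.exp 16 = Real.exp 1 ^ 16 := by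
    rw [← Real.exp_nat_mul]; norm_num
  have h3 : Real.exp 1 ^ 16 < 2.7182818286 ^ 16 := by
    apply pow_lt_pow_left₀ Real.exp_one_lt_d9 (Real.exp_pos 1).le
    norm_num
  have h4 : (2.7182818286:ℝ) ^ 16 < (19683/3125) ^ 9 := by norm_num
  have : Real.exp (16/9) ^ 9 < (19683/3125:ℝ) ^ 9 := by
    rw [h1, h2]; linarith
  exact lt_of_pow_lt_pow_left₀ 9 (by norm_num) this

theorem stmt18 (f : ℕ → ℝ) (h0 : f 0 = 9 / 10) (h1 : f 1 = 1 / 10) (h2 : f 2 = 9 / 10) :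
    (2 : ℝ) * (1 / 2) * (1 - 1 / 2) *
        ∑ k ∈ range 3, ((Nat.choose 2 k : ℝ) * (1 / 2 : ℝ) ^ k * (1 - 1 / 2 : ℝ) ^ (2 - k)) *
          ((k : ℝ) / 2 * (f k - f (k - 1)) + ((2 : ℝ) - k) / 2 * (f (k + 1) - f k)) ^ 2 / f k
      < (∑ k ∈ range 3,
            f k * Real.log (f k) * ((Nat.choose 2 k : ℝ) * (1 / 2 : ℝ) ^ k * (1 - 1 / 2 : ℝ) ^ (2 - k)))
        - (∑ k ∈ range 3,
            f k * ((Nat.choose 2 k : ℝ) * (1 / 2 : ℝ) ^ k * (1 - 1 / 2 : ℝ) ^ (2 - k))) *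
          Real.log (∑ k ∈ range 3,
            f k * ((Nat.choose 2 k : ℝ) * (1 / 2 : ℝ) ^ k * (1 - 1 / 2 : ℝ) ^ (2 - k))) := by
  have L3 := Real.log 3
  simp only [Finset.sum_range_succ, Finset.sum_range_zero]
  norm_num [h0, h1, h2]
  have e1 : Real.log (9/10) = 2*Real.log 3 - Real.log 2 - Real.log 5 := by
    rw [show (9:ℝ)/10 = 3^2/(2*5) by norm_num, Real.log_div (by norm_num) (by norm_num),
      Real.log_pow, Real.log_mul (by norm_num) (by norm_num)]; ring
  have e2 : Real.log (1/10) = -(Real.log 2 + Real.log 5) := by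
    rw [show (1:ℝ)/10 = (2*5)⁻¹ by norm_num, Real.log_inv,
      Real.log_mul (by norm_num) (by norm_num)]
  have e3 : Real.log (19683/3125) = 9*Real.log 3 - 5*Real.log 5 := by
    rw [show (19683:ℝ)/3125 = 3^9/5^5 by norm_num,
      Real.log_div (by norm_num) (by norm_num), Real.log_pow, Real.log_pow]; push_cast; ring
  have k := key18
  rw [e3] at k
  -- figure out remaining goal shape
  have e4 : Real.log (1/2) = -Real.log 2 := by rw [one_div, Real.log_inv]
  rw [e1, e2, e4]; linarith
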